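/- With notation as above, ‖L_J(B)‖ ≤ 2|J| ‖B‖ / g, where g := min_{r∈J, s∉J} |μ_r − μ_s| and |J| is the number of distinct eigenvalues in J, and ‖·‖ is the spectral norm. -/

import Mathlib

open Finset

/-- The spectral (operator) norm of a real square matrix. -/
noncomputable def opNorm {p : ℕ} (A : Matrix (Fin p) (Fin p) ℝ) : ℝ :=
  ‖Matrix.toEuclideanCLM (𝕜 := ℝ) (n := Fin p) A‖

/-- Norm bound for a linear combination of orthogonal projections with bounded
coefficients summing (for the projections) to the identity. -/
lemma proj_comb_norm_le {p q : ℕ}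
    (Q : Fin q → EuclideanSpace ℝ (Fin p) →L[ℝ] EuclideanSpace ℝ (Fin p))
    (hQsa : ∀ r, star (Q r) = Q r)
    (hmul : ∀ r s, Q r * Q s = if r = s then Q r else 0)
    (hsum : ∑ r, Q r = 1)
    (c : Fin q → ℝ) (M : ℝ) (hM : 0 ≤ M) (hc : ∀ s, |c s| ≤ M) :
    ‖∑ s, c s • Q s‖ ≤ M := by
  apply ContinuousLinearMap.opNorm_le_bound _ hM
  intro x
  have hadj : ∀ s (y z : EuclideanSpace ℝ (Fin p)),
      inner ℝ (Q s y) z = (inner ℝ y (Q s z) : ℝ) := by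
    intro s y z
    rw [← ContinuousLinearMap.adjoint_inner_left, ← ContinuousLinearMap.star_eq_adjoint, hQsa]
  have hcross : ∀ s t, inner ℝ (Q s x) (Q t x) = (if s = t then inner ℝ x (Q s x) else (0:ℝ)) := by
    intro s t
    rw [hadj s x (Q t x), ← ContinuousLinearMap.mul_apply, hmul]
    split
    · simp_all
    · simp
  set v : EuclideanSpace ℝ (Fin p) := (∑ s, c s • Q s) x with hv
  have hvx : v = ∑ s, c s • Q s x := by
    simp [hv, ContinuousLinearMap.sum_apply]
  have hdiag : ∀ s, (0:ℝ) ≤ inner ℝ x (Q s x) := by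
    intro s
    have : (inner ℝ (Q s x) (Q s x) : ℝ) = inner ℝ x (Q s x) := by
      rw [hcross s s]; simp
    rw [← this]
    exact real_inner_self_nonneg
  have hv2 : (inner ℝ v v : ℝ) = ∑ s, (c s)^2 * inner ℝ x (Q s x) := by
    rw [hvx, sum_inner]
    refine Finset.sum_congr rfl fun s _ => ?_
    rw [inner_sum]
    rw [Finset.sum_eq_single s]
    · rw [real_inner_smul_left, real_inner_smul_right, hcross s s]
      simp; ring
    · intro t _ hts
      rw [real_inner_smul_left, real_inner_smul_right, hcross s t]
      simp [Ne.symm hts]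
    · simp
  have hsumx : ∑ s, (inner ℝ x (Q s x) : ℝ) = ‖x‖^2 := by
    have : ∑ s, (inner ℝ x (Q s x) : ℝ) = inner ℝ x ((∑ s, Q s) x) := by
      rw [ContinuousLinearMap.sum_apply, inner_sum]
    rw [this, hsum, ContinuousLinearMap.one_apply, real_inner_self_eq_norm_sq]
  have hbound : (inner ℝ v v : ℝ) ≤ (M * ‖x‖)^2 := by
    rw [hv2]
    calc ∑ s, (c s)^2 * inner ℝ x (Q s x) ≤ ∑ s, M^2 * inner ℝ x (Q s x) := by
          refine Finset.sum_le_sum fun s _ => ?_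
          exact mul_le_mul_of_nonneg_right (by
            have := hc s
            nlinarith [abs_nonneg (c s), sq_abs (c s)]) (hdiag s)
      _ = M^2 * ‖x‖^2 := by rw [← Finset.mul_sum, hsumx]
      _ = (M * ‖x‖)^2 := by ring
  have hfin : ‖v‖^2 ≤ (M * ‖x‖)^2 := by rwa [← real_inner_self_eq_norm_sq]
  calc ‖v‖ = Real.sqrt (‖v‖^2) := by rw [Real.sqrt_sq (norm_nonneg _)]
    _ ≤ Real.sqrt ((M * ‖x‖)^2) := Real.sqrt_le_sqrt hfin
    _ = M * ‖x‖ := Real.sqrt_sq (by positivity)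

set_option maxHeartbeats 1000000 in
set_option synthInstance.maxHeartbeats 400000 in
/-- With `A = ∑_r μ_r P_r` the spectral decomposition of a symmetric matrix into distinct
eigenvalues with orthogonal projectors, `B` symmetric, and
`L_J(B) = ∑_{r ∈ J} ∑_{s ∉ J} (P_r B P_s + P_s B P_r)/(μ_r - μ_s)`, one has
`‖L_J(B)‖ ≤ 2 |J| ‖B‖ / g` where `g > 0` is the spectral gap
`g := min_{r ∈ J, s ∉ J} |μ_r - μ_s|`. -/
theorem opNorm_L_le {p q : ℕ} (A : Matrix (Fin p) (Fin p) ℝ)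
    (μ : Fin q → ℝ) (hμ : Function.Injective μ)
    (P : Fin q → Matrix (Fin p) (Fin p) ℝ)
    (hsymm : ∀ r, (P r).IsSymm)
    (hidem : ∀ r, P r * P r = P r)
    (horth : ∀ r s, r ≠ s → P r * P s = 0)
    (hsum : ∑ r, P r = 1)
    (hA : A = ∑ r, μ r • P r)
    (B : Matrix (Fin p) (Fin p) ℝ) (hB : B.IsSymm)
    (J : Finset (Fin q))
    (L : Matrix (Fin p) (Fin p) ℝ)
    (hL : L = ∑ r ∈ J, ∑ s ∈ Jᶜ, (μ r - μ s)⁻¹ • (P r * B * P s + P s * B * P r))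
    (g : ℝ) (hg : 0 < g) (hgap : ∀ r ∈ J, ∀ s ∈ Jᶜ, g ≤ |μ r - μ s|) :
    opNorm L ≤ 2 * J.card * opNorm B / g := by
  classical
  set f := Matrix.toEuclideanCLM (𝕜 := ℝ) (n := Fin p) with hf
  set Q : Fin q → EuclideanSpace ℝ (Fin p) →L[ℝ] EuclideanSpace ℝ (Fin p) :=
    fun r => f (P r) with hQ
  set b := f B with hb
  have hQsa : ∀ r, star (Q r) = Q r := by
    intro r
    rw [hQ]
    simp only
    rw [← map_star]
    congr 1
    rw [Matrix.star_eq_conjTranspose]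
    have h := (hsymm r)
    rw [Matrix.IsSymm] at h
    conv_rhs => rw [← h]
    ext i j
    simp [Matrix.conjTranspose_apply, Matrix.transpose_apply]
  have hQmul : ∀ r s, Q r * Q s = if r = s then Q r else 0 := by
    intro r s
    simp only [hQ, ← map_mul]
    split
    · subst ‹r = s›; rw [hidem]
    · rw [horth r s ‹r ≠ s›, map_zero]
  have hQsum : ∑ r, Q r = 1 := by
    simp only [hQ, ← map_sum, hsum, map_one]
  have hQnorm : ∀ r, ‖Q r‖ ≤ 1 := by
    intro r
    have h := proj_comb_norm_le Q hQsa hQmul hQsum (fun s => if s = r then 1 else 0) 1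
      zero_le_one (fun s => by split <;> simp)
    have hrw : (∑ s, (if s = r then (1:ℝ) else 0) • Q s) = Q r := by
      calc ∑ s, (if s = r then (1:ℝ) else 0) • Q s
          = ∑ s, (if s = r then Q s else 0) := by
            refine Finset.sum_congr rfl fun s _ => ?_
            split
            · simp
            · exact zero_smul ℝ (Q s)
        _ = Q r := by rw [Finset.sum_ite_eq' Finset.univ r Q]; simp
    rwa [hrw] at h
  set C : Fin q → EuclideanSpace ℝ (Fin p) →L[ℝ] EuclideanSpace ℝ (Fin p) :=
    fun r => ∑ s ∈ Jᶜ, (μ r - μ s)⁻¹ • Q s with hC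
  have hCnorm : ∀ r ∈ J, ‖C r‖ ≤ g⁻¹ := by
    intro r hr
    have hrep : (∑ s, (if s ∈ Jᶜ then (μ r - μ s)⁻¹ else 0) • Q s) = C r := by
      calc ∑ s, (if s ∈ Jᶜ then (μ r - μ s)⁻¹ else 0) • Q s
          = ∑ s, (if s ∈ Jᶜ then (μ r - μ s)⁻¹ • Q s else 0) := by
            refine Finset.sum_congr rfl fun s _ => ?_
            split
            · rfl
            · exact zero_smul ℝ (Q s)
        _ = ∑ s ∈ Jᶜ, (μ r - μ s)⁻¹ • Q s := by
            rw [← Finset.sum_filter]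
            congr 1
            ext t
            simp
        _ = C r := by rw [hC]
    rw [← hrep]
    refine proj_comb_norm_le Q hQsa hQmul hQsum _ g⁻¹ (by positivity) ?_
    intro s
    by_cases hs : s ∈ Jᶜ
    · simp only [hs, if_true, abs_inv]
      exact inv_anti₀ hg (hgap r hr s hs)
    · simp only [hs, if_false, abs_zero]
      positivity
  have hfL : f L = ∑ r ∈ J, (Q r * b * C r + C r * b * Q r) := by
    rw [hL, map_sum]
    refine Finset.sum_congr rfl fun r _ => ?_
    rw [map_sum]
    have h1 : ∀ s ∈ Jᶜ, f ((μ r - μ s)⁻¹ • (P r * B * P s + P s * B * P r)) =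
        (μ r - μ s)⁻¹ • (Q r * b * Q s + Q s * b * Q r) := by
      intro s _
      rw [map_smul, map_add, map_mul, map_mul, map_mul, map_mul]
    rw [Finset.sum_congr rfl h1, hC]
    simp only
    rw [Finset.mul_sum, Finset.sum_mul, Finset.sum_mul, ← Finset.sum_add_distrib]
    refine Finset.sum_congr rfl fun s _ => ?_
    have e1 : Q r * b * ((μ r - μ s)⁻¹ • Q s) = (μ r - μ s)⁻¹ • (Q r * b * Q s) := by
      ext x; simp [ContinuousLinearMap.mul_apply, map_smul]
    have e2 : ((μ r - μ s)⁻¹ • Q s) * b * Q r = (μ r - μ s)⁻¹ • (Q s * b * Q r) := by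
      ext x; simp [ContinuousLinearMap.mul_apply]
    rw [smul_add, e1, e2]
  have hterm : ∀ r ∈ J, ‖Q r * b * C r + C r * b * Q r‖ ≤ 2 * ‖b‖ * g⁻¹ := by
    intro r hr
    have a1 := norm_mul_le (Q r * b) (C r)
    have a2 := norm_mul_le (Q r) b
    have a3 := norm_mul_le (C r * b) (Q r)
    have a4 := norm_mul_le (C r) b
    have hq := hQnorm r
    have hc := hCnorm r hr
    have hginv : (0:ℝ) < g⁻¹ := by positivity
    calc ‖Q r * b * C r + C r * b * Q r‖
        ≤ ‖Q r * b * C r‖ + ‖C r * b * Q r‖ := norm_add_le _ _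
      _ ≤ 2 * ‖b‖ * g⁻¹ := by
          nlinarith [norm_nonneg (C r), norm_nonneg (Q r), norm_nonneg b,
            norm_nonneg (Q r * b), norm_nonneg (C r * b)]
  have hbB : opNorm B = ‖b‖ := rfl
  calc opNorm L = ‖f L‖ := rfl
    _ ≤ ∑ r ∈ J, ‖Q r * b * C r + C r * b * Q r‖ := by rw [hfL]; exact norm_sum_le _ _
    _ ≤ ∑ _r ∈ J, 2 * ‖b‖ * g⁻¹ := Finset.sum_le_sum hterm
    _ = J.card * (2 * ‖b‖ * g⁻¹) := by rw [Finset.sum_const, nsmul_eq_mul]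
    _ = 2 * J.card * opNorm B / g := by rw [hbB]; field_simp
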